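/- arXiv:2501.14843 — 2 statements merged into one kernel-verified Lean document; each statement's English description precedes it below -/
import Mathlib

section
/- Fix T > 0, let (E, ℰ) be a measurable space with a σ-finite measure λ, and let λ_T be the product of Lebesgue measure on [0,T] with λ. Let G : [0,T] × E → [0,∞) be measurable with ∫_{[0,T]×E} G² dλ_T < ∞, and suppose there exists δ > 0 such that ∫_X exp(δ G²) dλ_T < ∞ for every measurable X ⊆ [0,T] × E with λ_T(X) < ∞. Then for every Υ > 0 and every η > 0 there exists δ′ > 0 such that for every Lebesgue measurable A ⊆ [0,T] with Lebesgue measure less than δ′ one has sup_{ρ ∈ S̃^Υ} ∫_A ∫_E G(s,ξ) |ρ(s,ξ) − 1| λ(dξ) ds ≤ η. -/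
open Real

/-- Fenchel duality for `l(b) = b log b - b + 1`: `a*b ≤ e^a - 1 + l b`. -/
lemma aux_fenchel (a b : ℝ) (hb : 0 ≤ b) :
    a * b ≤ Real.exp a - 1 + (b * Real.log b - b + 1) := by
  rcases eq_or_lt_of_le hb with h0 | hb'
  · simp [← h0]
    positivity
  · have h1 : (a - Real.log b) + 1 ≤ Real.exp (a - Real.log b) := Real.add_one_le_exp _
    have h2 : b * ((a - Real.log b) + 1) ≤ b * Real.exp (a - Real.log b) :=
      mul_le_mul_of_nonneg_left h1 hb
    have h3 : b * Real.exp (a - Real.log b) = Real.exp a := by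
      rw [Real.exp_sub, Real.exp_log hb']
      field_simp
    nlinarith [h2, h3]

lemma aux_entropy_nonneg (b : ℝ) (hb : 0 ≤ b) : 0 ≤ b * Real.log b - b + 1 := by
  have := aux_fenchel 0 b hb
  simp at this
  linarith

lemma aux_sinh (a : ℝ) (ha : 0 ≤ a) : 2 * a + Real.exp (-a) ≤ Real.exp a := by
  have hS : 1 + a + a ^ 2 / 2 + a ^ 3 / 6 ≤ Real.exp a := by
    have := Real.sum_le_exp_of_nonneg ha 4
    norm_num [Finset.sum_range_succ, Nat.factorial] at this
    nlinarith [this]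
  have hpos := Real.exp_pos a
  rw [Real.exp_neg]
  have key : 2 * a * Real.exp a + 1 ≤ Real.exp a * Real.exp a := by
    nlinarith [hS, hpos, sq_nonneg a, mul_nonneg (mul_nonneg ha ha) ha,
      mul_le_mul hS hS (by positivity) hpos.le]
  rw [inv_eq_one_div, ← sub_nonneg]
  have : Real.exp a - (2 * a + 1 / Real.exp a)
      = (Real.exp a * Real.exp a - (2 * a * Real.exp a + 1)) / Real.exp a := by
    field_simp
  rw [this]
  exact div_nonneg (by linarith [key]) hpos.le

lemma aux_key (a b : ℝ) (ha : 0 ≤ a) (hb : 0 ≤ b) :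
    a * |b - 1| ≤ (Real.exp a - a - 1) + (b * Real.log b - b + 1) := by
  rcases le_or_gt 1 b with h | h
  · rw [abs_of_nonneg (by linarith)]
    nlinarith [aux_fenchel a b hb]
  · rw [abs_of_neg (by linarith)]
    nlinarith [aux_fenchel (-a) b hb, aux_sinh a ha]

lemma aux_h_nonneg (x : ℝ) : 0 ≤ Real.exp x - x - 1 := by
  nlinarith [Real.add_one_le_exp x]

lemma aux_h_le_sq (x : ℝ) (hx : 0 ≤ x) : Real.exp x - x - 1 ≤ x ^ 2 * Real.exp x := by
  have h0 : 1 - x ≤ Real.exp (-x) := by nlinarith [Real.add_one_le_exp (-x)]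
  have h1 : (1 - x) * Real.exp x ≤ 1 := by
    calc (1 - x) * Real.exp x ≤ Real.exp (-x) * Real.exp x :=
          mul_le_mul_of_nonneg_right h0 (Real.exp_pos x).le
    _ = 1 := by rw [← Real.exp_add]; simp
  have h2 : Real.exp x - 1 ≤ x * Real.exp x := by nlinarith
  nlinarith [mul_le_mul_of_nonneg_left h2 hx]

open MeasureTheory

/-- (Lemma 6.7(ii): uniform equi-absolute-continuity.)
Let `λ` be σ-finite on `E`, `λ_T = (Lebesgue on [0,T]) ⊗ λ`, and let `G ≥ 0` be
measurable, square integrable w.r.t. `λ_T`, and exponentially square integrable on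
sets of finite `λ_T`-measure.  Then for every `Υ > 0` and `η > 0` there is `δ′ > 0`
such that for every measurable `A ⊆ [0,T]` of Lebesgue measure `< δ′` and every
`ρ ∈ S̃^Υ`, `∫_A ∫_E G |ρ − 1| dλ ds ≤ η`. -/
theorem equi_absolute_continuity_controls
    {E : Type*} [MeasurableSpace E] (lam : Measure E) [SigmaFinite lam]
    (T : ℝ) (hT : 0 < T)
    (lamT : Measure (ℝ × E))
    (hlamT : lamT = (volume.restrict (Set.Icc (0:ℝ) T)).prod lam)
    (G : ℝ × E → ℝ) (hGmeas : Measurable G) (hGpos : ∀ p, 0 ≤ G p)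
    (hGsq : Integrable (fun p => G p ^ 2) lamT)
    (δ : ℝ) (hδ : 0 < δ)
    (hexp : ∀ X : Set (ℝ × E), MeasurableSet X → lamT X < ⊤ →
      IntegrableOn (fun p => Real.exp (δ * G p ^ 2)) X lamT)
    (Υ : ℝ) (hΥ : 0 < Υ) :
    ∀ η : ℝ, 0 < η → ∃ δ' : ℝ, 0 < δ' ∧
      ∀ A : Set ℝ, MeasurableSet A → A ⊆ Set.Icc (0:ℝ) T →
        volume A < ENNReal.ofReal δ' →
        ∀ ρ : ℝ × E → ℝ, Measurable ρ → (∀ p, 0 ≤ ρ p) →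
          (∫⁻ p, ENNReal.ofReal (ρ p * Real.log (ρ p) - ρ p + 1) ∂lamT
            ≤ ENNReal.ofReal Υ) →
          ∫⁻ p in A ×ˢ (Set.univ : Set E),
              ENNReal.ofReal (G p * |ρ p - 1|) ∂lamT ≤ ENNReal.ofReal η := by
  intro η hη
  set μ := volume.restrict (Set.Icc (0:ℝ) T) with hμ
  -- choose κ
  set κ : ℝ := max 1 (2 * Υ / η) with hκdef
  have hκ1 : (1:ℝ) ≤ κ := le_max_left _ _
  have hκpos : (0:ℝ) < κ := lt_of_lt_of_le one_pos hκ1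
  have hκΥ : Υ / κ ≤ η / 2 := by
    rw [div_le_iff₀ hκpos]
    have h2 : 2 * Υ / η ≤ κ := le_max_right _ _
    rw [div_le_iff₀ hη] at h2
    nlinarith
  -- the function h and F
  set h : ℝ × E → ℝ := fun p => Real.exp (κ * G p) - κ * G p - 1 with hh
  have hhmeas : Measurable h :=
    ((Real.measurable_exp.comp (hGmeas.const_mul κ)).sub (hGmeas.const_mul κ)).sub
      measurable_const
  have hhnonneg : ∀ p, 0 ≤ h p := fun p => aux_h_nonneg (κ * G p)
  set F : ℝ × E → ENNReal := fun p => ENNReal.ofReal (h p) with hF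
  have hFmeas : Measurable F := hhmeas.ennreal_ofReal
  -- finiteness of ∫ G²
  have hGsq_lint : ∫⁻ p, ENNReal.ofReal (G p ^ 2) ∂lamT < ⊤ := hGsq.lintegral_lt_top
  -- the set X = {G ≥ 1}
  set X : Set (ℝ × E) := {p | 1 ≤ G p} with hX
  have hXmeas : MeasurableSet X := measurableSet_le measurable_const hGmeas
  have hXfin : lamT X < ⊤ := by
    have h1 : lamT X = ∫⁻ p in X, 1 ∂lamT := (setLIntegral_one _).symm
    have h2 : ∫⁻ p in X, 1 ∂lamT ≤ ∫⁻ p in X, ENNReal.ofReal (G p ^ 2) ∂lamT := by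
      apply setLIntegral_mono ((hGmeas.pow_const 2).ennreal_ofReal)
      intro p hp
      have hp' : (1:ℝ) ≤ G p := hp
      have : (1:ℝ) ≤ G p ^ 2 := by nlinarith
      simpa using ENNReal.one_le_ofReal.mpr this
    calc lamT X = ∫⁻ p in X, 1 ∂lamT := h1
      _ ≤ ∫⁻ p in X, ENNReal.ofReal (G p ^ 2) ∂lamT := h2
      _ ≤ ∫⁻ p, ENNReal.ofReal (G p ^ 2) ∂lamT := setLIntegral_le_lintegral _ _
      _ < ⊤ := hGsq_lint
  have hexpint : ∫⁻ p in X, ENNReal.ofReal (Real.exp (δ * G p ^ 2)) ∂lamT < ⊤ :=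
    (hexp X hXmeas hXfin).setLIntegral_lt_top
  -- finiteness of ∫ F
  have Hfin : ∫⁻ p, F p ∂lamT < ⊤ := by
    rw [← lintegral_add_compl (f := F) hXmeas]
    have hXpart : ∫⁻ p in X, F p ∂lamT < ⊤ := by
      have hb : ∀ p, h p ≤ Real.exp (κ ^ 2 / (4 * δ)) * Real.exp (δ * G p ^ 2) := by
        intro p
        have h1 : κ * G p ≤ δ * G p ^ 2 + κ ^ 2 / (4 * δ) := by
          have := sq_nonneg (2 * δ * G p - κ)
          have h4 : 0 < 4 * δ := by linarith
          rw [← sub_nonneg]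
          have : δ * G p ^ 2 + κ ^ 2 / (4 * δ) - κ * G p
              = (2 * δ * G p - κ) ^ 2 / (4 * δ) := by field_simp; ring
          rw [this]
          positivity
        calc h p ≤ Real.exp (κ * G p) := by
              have := mul_nonneg hκpos.le (hGpos p); simp only [hh]; linarith
          _ ≤ Real.exp (δ * G p ^ 2 + κ ^ 2 / (4 * δ)) := Real.exp_le_exp.mpr h1
          _ = Real.exp (κ ^ 2 / (4 * δ)) * Real.exp (δ * G p ^ 2) := by
              rw [← Real.exp_add]; ring_nf
      calc ∫⁻ p in X, F p ∂lamT
          ≤ ∫⁻ p in X, ENNReal.ofReal (Real.exp (κ ^ 2 / (4 * δ)))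
              * ENNReal.ofReal (Real.exp (δ * G p ^ 2)) ∂lamT := by
            apply setLIntegral_mono
              (measurable_const.mul ((Real.measurable_exp.comp ((hGmeas.pow_const 2).const_mul δ)).ennreal_ofReal))
            intro p _
            simp only [Pi.mul_apply, Function.comp_apply]
            rw [← ENNReal.ofReal_mul (Real.exp_pos _).le]
            exact ENNReal.ofReal_le_ofReal (hb p)
        _ = ENNReal.ofReal (Real.exp (κ ^ 2 / (4 * δ)))
              * ∫⁻ p in X, ENNReal.ofReal (Real.exp (δ * G p ^ 2)) ∂lamT :=
            lintegral_const_mul _ ((Real.measurable_exp.comp ((hGmeas.pow_const 2).const_mul δ)).ennreal_ofReal)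
        _ < ⊤ := ENNReal.mul_lt_top ENNReal.ofReal_lt_top hexpint
    have hXcpart : ∫⁻ p in Xᶜ, F p ∂lamT < ⊤ := by
      calc ∫⁻ p in Xᶜ, F p ∂lamT
          ≤ ∫⁻ p in Xᶜ, ENNReal.ofReal (κ ^ 2 * Real.exp κ)
              * ENNReal.ofReal (G p ^ 2) ∂lamT := by
            apply setLIntegral_mono
              (measurable_const.mul ((hGmeas.pow_const 2).ennreal_ofReal))
            intro p hp
            have hG1 : G p ≤ 1 := le_of_not_ge hp
            have h1 : h p ≤ (κ * G p) ^ 2 * Real.exp (κ * G p) :=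
              aux_h_le_sq (κ * G p) (mul_nonneg hκpos.le (hGpos p))
            have h2 : Real.exp (κ * G p) ≤ Real.exp κ := by
              apply Real.exp_le_exp.mpr
              nlinarith [hGpos p]
            have h3 : h p ≤ κ ^ 2 * Real.exp κ * G p ^ 2 := by
              have hsq : (κ * G p) ^ 2 = κ ^ 2 * G p ^ 2 := by ring
              nlinarith [sq_nonneg (κ * G p), Real.exp_pos (κ * G p), sq_nonneg (G p),
                sq_nonneg κ, mul_nonneg (sq_nonneg (κ * G p)) (Real.exp_pos (κ * G p)).le]
            simp only [Pi.mul_apply]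
            rw [← ENNReal.ofReal_mul (by positivity)]
            exact ENNReal.ofReal_le_ofReal h3
        _ = ENNReal.ofReal (κ ^ 2 * Real.exp κ)
              * ∫⁻ p in Xᶜ, ENNReal.ofReal (G p ^ 2) ∂lamT :=
            lintegral_const_mul _ ((hGmeas.pow_const 2).ennreal_ofReal)
        _ ≤ ENNReal.ofReal (κ ^ 2 * Real.exp κ)
              * ∫⁻ p, ENNReal.ofReal (G p ^ 2) ∂lamT :=
            mul_le_mul_right (setLIntegral_le_lintegral _ _) _
        _ < ⊤ := ENNReal.mul_lt_top ENNReal.ofReal_lt_top hGsq_lint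
    exact ENNReal.add_lt_top.mpr ⟨hXpart, hXcpart⟩
  -- slicewise integral
  set φ : ℝ → ENNReal := fun s => ∫⁻ ξ, F (s, ξ) ∂lam with hφ
  have hφmeas : Measurable φ := hFmeas.lintegral_prod_right'
  have hφtot : ∫⁻ s, φ s ∂μ = ∫⁻ p, F p ∂lamT := by
    rw [hlamT, lintegral_prod F hFmeas.aemeasurable]
  have hφfin : ∫⁻ s, φ s ∂μ ≠ ⊤ := by rw [hφtot]; exact Hfin.ne
  -- absolute continuity
  have hεne : ENNReal.ofReal (κ * (η / 2)) ≠ 0 := by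
    simp only [ne_eq, ENNReal.ofReal_eq_zero, not_le]
    positivity
  obtain ⟨d, hd0, hd⟩ := exists_pos_setLIntegral_lt_of_measure_lt hφfin hεne
  refine ⟨(min d 1).toReal, ?_, ?_⟩
  · apply ENNReal.toReal_pos
    · exact (lt_min hd0 zero_lt_one).ne'
    · exact ne_top_of_le_ne_top ENNReal.one_ne_top (min_le_right _ _)
  intro A hAmeas hAsub hAvol ρ hρmeas hρpos hent
  -- μ A < d
  have hμA : μ A < d := by
    have h1 : μ A ≤ volume A := Measure.restrict_le_self A
    have h2 : ENNReal.ofReal (min d 1).toReal = min d 1 :=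
      ENNReal.ofReal_toReal (ne_top_of_le_ne_top ENNReal.one_ne_top (min_le_right _ _))
    calc μ A ≤ volume A := h1
      _ < ENNReal.ofReal (min d 1).toReal := hAvol
      _ = min d 1 := h2
      _ ≤ d := min_le_left _ _
  -- the F-integral over A × univ is small
  have hAbound : ∫⁻ p in A ×ˢ (Set.univ : Set E), F p ∂lamT
      ≤ ENNReal.ofReal (κ * (η / 2)) := by
    have hrestr : lamT.restrict (A ×ˢ (Set.univ : Set E)) = (μ.restrict A).prod lam := by
      rw [hlamT]
      exact (Measure.restrict_prod_eq_prod_univ A).symm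
    calc ∫⁻ p in A ×ˢ (Set.univ : Set E), F p ∂lamT
        = ∫⁻ p, F p ∂((μ.restrict A).prod lam) := by rw [hrestr]
      _ = ∫⁻ s, φ s ∂(μ.restrict A) := lintegral_prod F hFmeas.aemeasurable
      _ ≤ ENNReal.ofReal (κ * (η / 2)) := (hd A hμA).le
  -- the entropy function
  set l : ℝ × E → ℝ := fun p => ρ p * Real.log (ρ p) - ρ p + 1 with hl
  have hlmeas : Measurable l :=
    ((hρmeas.mul (Real.measurable_log.comp hρmeas)).sub hρmeas).add measurable_const
  have hlnonneg : ∀ p, 0 ≤ l p := fun p => aux_entropy_nonneg (ρ p) (hρpos p)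
  -- pointwise bound
  have hpoint : ∀ p, G p * |ρ p - 1| ≤ (1 / κ) * h p + (1 / κ) * l p := by
    intro p
    have hkey := aux_key (κ * G p) (ρ p) (mul_nonneg hκpos.le (hGpos p)) (hρpos p)
    have : κ * (G p * |ρ p - 1|) ≤ h p + l p := by
      simp only [hh, hl]
      nlinarith [hkey]
    calc G p * |ρ p - 1| = (1 / κ) * (κ * (G p * |ρ p - 1|)) := by field_simp
      _ ≤ (1 / κ) * (h p + l p) := by
          apply mul_le_mul_of_nonneg_left this (by positivity)
      _ = (1 / κ) * h p + (1 / κ) * l p := by ring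
  -- main estimate
  calc ∫⁻ p in A ×ˢ (Set.univ : Set E), ENNReal.ofReal (G p * |ρ p - 1|) ∂lamT
      ≤ ∫⁻ p in A ×ˢ (Set.univ : Set E),
          (ENNReal.ofReal (1 / κ) * F p + ENNReal.ofReal (1 / κ) * ENNReal.ofReal (l p))
            ∂lamT := by
        apply lintegral_mono
        intro p
        calc ENNReal.ofReal (G p * |ρ p - 1|)
            ≤ ENNReal.ofReal ((1 / κ) * h p + (1 / κ) * l p) :=
              ENNReal.ofReal_le_ofReal (hpoint p)
          _ = ENNReal.ofReal (1 / κ) * F p + ENNReal.ofReal (1 / κ) * ENNReal.ofReal (l p) := by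
              rw [ENNReal.ofReal_add (mul_nonneg (by positivity) (hhnonneg p)) (mul_nonneg (by positivity) (hlnonneg p)),
                ENNReal.ofReal_mul (by positivity), ENNReal.ofReal_mul (by positivity)]
    _ = ENNReal.ofReal (1 / κ) * ∫⁻ p in A ×ˢ (Set.univ : Set E), F p ∂lamT
          + ENNReal.ofReal (1 / κ)
            * ∫⁻ p in A ×ˢ (Set.univ : Set E), ENNReal.ofReal (l p) ∂lamT := by
        rw [lintegral_add_left (hFmeas.const_mul _),
          lintegral_const_mul _ hFmeas,
          lintegral_const_mul _ (hlmeas.ennreal_ofReal)]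
    _ ≤ ENNReal.ofReal (1 / κ) * ENNReal.ofReal (κ * (η / 2))
          + ENNReal.ofReal (1 / κ) * ENNReal.ofReal Υ := by
        apply add_le_add
        · exact mul_le_mul_right hAbound _
        · exact mul_le_mul_right ((setLIntegral_le_lintegral _ _).trans hent) _
    _ = ENNReal.ofReal ((1 / κ) * (κ * (η / 2)) + (1 / κ) * Υ) := by
        rw [← ENNReal.ofReal_mul (by positivity), ← ENNReal.ofReal_mul (by positivity),
          ENNReal.ofReal_add (by positivity) (by positivity)]
    _ ≤ ENNReal.ofReal η := by
        apply ENNReal.ofReal_le_ofReal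
        have h1 : (1 / κ) * (κ * (η / 2)) = η / 2 := by field_simp
        have h2 : (1 / κ) * Υ = Υ / κ := by ring
        rw [h1, h2]
        linarith [hκΥ]
end

section
/- Fix T > 0, Υ > 0. Let E be a locally compact Polish space with its Borel σ-algebra, λ a σ-finite Borel measure on E which is finite on compact sets, and λ_T the product of Lebesgue measure on [0,T] with λ. Let d : [0,T] × E → ℝ be measurable with ∫_{[0,T]×E} |d|² dλ_T < ∞ and such that for every δ₃ > 0 and every measurable X ⊆ [0,T] × E with λ_T(X) < ∞, ∫_X exp(δ₃|d|) dλ_T < ∞. Then for every compact set K ⊆ E, lim_{M→∞} sup_{ρ ∈ S̃^Υ} ∫₀ᵀ ∫_K |d(s,ξ)| · 1_{{|d(s,ξ)| ≥ M}} · ρ(s,ξ) λ(dξ) ds = 0. -/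
open MeasureTheory

lemma l_nonneg (y : ℝ) (hy : 0 ≤ y) : 0 ≤ y * Real.log y - y + 1 := by
  rcases eq_or_lt_of_le hy with h | h
  · simp [← h]
  · have h1 : Real.log y⁻¹ ≤ y⁻¹ - 1 := Real.log_le_sub_one_of_pos (by positivity)
    rw [Real.log_inv] at h1
    have h2 : y * y⁻¹ = 1 := mul_inv_cancel₀ h.ne'
    nlinarith

lemma mul_le_exp_add_l (x y : ℝ) (hy : 0 ≤ y) :
    x * y ≤ Real.exp x + (y * Real.log y - y + 1) := by
  rcases eq_or_lt_of_le hy with h | h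
  · simp [← h]; positivity
  · have h1 : (x - Real.log y) + 1 ≤ Real.exp (x - Real.log y) := Real.add_one_le_exp _
    have h2 : Real.exp (x - Real.log y) = Real.exp x / y := by
      rw [Real.exp_sub, Real.exp_log h]
    rw [h2] at h1
    have h3 : ((x - Real.log y) + 1) * y ≤ (Real.exp x / y) * y :=
      mul_le_mul_of_nonneg_right h1 hy
    rw [div_mul_cancel₀ _ h.ne'] at h3
    nlinarith

/-- (Lemma 6.9(iii): uniform truncation estimate.)  Let `E` be a
locally compact Polish space, `λ` a σ-finite Borel measure on `E` finite on compacts,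
`λ_T = (Lebesgue on [0,T]) ⊗ λ`, and let `d` be measurable, square integrable w.r.t.
`λ_T`, and exponentially integrable on sets of finite `λ_T`-measure for every rate
`δ₃ > 0`.  Then for every compact `K ⊆ E`,
`lim_{M→∞} sup_{ρ ∈ S̃^Υ} ∫₀ᵀ∫_K |d| 1_{|d| ≥ M} ρ dλ ds = 0`. -/
theorem truncation_estimate_of_controls
    {E : Type*} [TopologicalSpace E] [PolishSpace E] [LocallyCompactSpace E]
    [MeasurableSpace E] [BorelSpace E]
    (lam : Measure E) [SigmaFinite lam] [IsFiniteMeasureOnCompacts lam]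
    (T : ℝ) (hT : 0 < T) (Υ : ℝ) (hΥ : 0 < Υ)
    (lamT : Measure (ℝ × E))
    (hlamT : lamT = (volume.restrict (Set.Icc (0:ℝ) T)).prod lam)
    (d : ℝ × E → ℝ) (hdmeas : Measurable d)
    (hdsq : Integrable (fun p => |d p| ^ 2) lamT)
    (hexp : ∀ δ₃ : ℝ, 0 < δ₃ → ∀ X : Set (ℝ × E), MeasurableSet X → lamT X < ⊤ →
      IntegrableOn (fun p => Real.exp (δ₃ * |d p|)) X lamT) :
    ∀ K : Set E, IsCompact K →
      ∀ ε : ℝ, 0 < ε → ∃ M₀ : ℝ, ∀ M : ℝ, M₀ ≤ M →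
        ∀ ρ : ℝ × E → ℝ, Measurable ρ → (∀ p, 0 ≤ ρ p) →
          (∫⁻ p, ENNReal.ofReal (ρ p * Real.log (ρ p) - ρ p + 1) ∂lamT
            ≤ ENNReal.ofReal Υ) →
          ∫⁻ p in ((Set.univ : Set ℝ) ×ˢ K) ∩ {p : ℝ × E | M ≤ |d p|},
              ENNReal.ofReal (|d p| * ρ p) ∂lamT ≤ ENNReal.ofReal ε := by
  intro K hK ε hε
  set σ : ℝ := 2 * Υ / ε with hσdef
  have hσ : 0 < σ := by positivity
  have hKmeas : MeasurableSet K := hK.isClosed.measurableSet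
  have hXmeas : MeasurableSet ((Set.univ : Set ℝ) ×ˢ K) := MeasurableSet.univ.prod hKmeas
  have hXfin : lamT ((Set.univ : Set ℝ) ×ˢ K) < ⊤ := by
    rw [hlamT, Measure.prod_prod, Measure.restrict_apply_univ, Real.volume_Icc]
    exact ENNReal.mul_lt_top ENNReal.ofReal_lt_top hK.measure_lt_top
  set C : ENNReal :=
    ∫⁻ p in (Set.univ : Set ℝ) ×ˢ K, ENNReal.ofReal (Real.exp (2 * σ * |d p|)) ∂lamT
    with hCdef
  have hC : C < ⊤ := (hexp (2 * σ) (by positivity) _ hXmeas hXfin).lintegral_lt_top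
  refine ⟨σ⁻¹ * (Real.log (C.toReal + 1) - Real.log (σ * ε / 2)), ?_⟩
  intro M hM ρ hρmeas hρnonneg hent
  have hC0 : 0 ≤ C.toReal := ENNReal.toReal_nonneg
  -- key scalar bound from the choice of M₀
  have hexpM : Real.exp (-(σ * M)) * C.toReal ≤ σ * ε / 2 := by
    have hσM : Real.log (C.toReal + 1) - Real.log (σ * ε / 2) ≤ σ * M := by
      have h0 := mul_le_mul_of_nonneg_left hM hσ.le
      have heq : σ * (σ⁻¹ * (Real.log (C.toReal + 1) - Real.log (σ * ε / 2)))
          = Real.log (C.toReal + 1) - Real.log (σ * ε / 2) := by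
        rw [← mul_assoc, mul_inv_cancel₀ hσ.ne', one_mul]
      linarith
    have h2 : Real.exp (-(σ * M)) ≤ (σ * ε / 2) / (C.toReal + 1) := by
      have h1 : -(σ * M) ≤ Real.log (σ * ε / 2) - Real.log (C.toReal + 1) := by linarith
      calc Real.exp (-(σ * M))
          ≤ Real.exp (Real.log (σ * ε / 2) - Real.log (C.toReal + 1)) :=
            Real.exp_le_exp.mpr h1
        _ = (σ * ε / 2) / (C.toReal + 1) := by
            rw [Real.exp_sub, Real.exp_log (by positivity), Real.exp_log (by positivity)]
    have h3 : Real.exp (-(σ * M)) * (C.toReal + 1) ≤ σ * ε / 2 :=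
      (le_div_iff₀ (by positivity)).mp h2
    nlinarith [Real.exp_nonneg (-(σ * M))]
  -- measurability
  have hl_meas : Measurable (fun p => ρ p * Real.log (ρ p) - ρ p + 1) :=
    ((hρmeas.mul (Real.measurable_log.comp hρmeas)).sub hρmeas).add measurable_const
  have hexp_meas : Measurable (fun p : ℝ × E => Real.exp (2 * σ * |d p|)) :=
    Real.measurable_exp.comp (measurable_const.mul hdmeas.abs)
  set A := ((Set.univ : Set ℝ) ×ˢ K) ∩ {p : ℝ × E | M ≤ |d p|} with hAdef
  set G : ℝ × E → ENNReal := fun p =>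
    ENNReal.ofReal σ⁻¹ * (ENNReal.ofReal (Real.exp (-(σ * M)))
      * ENNReal.ofReal (Real.exp (2 * σ * |d p|))
      + ENNReal.ofReal (ρ p * Real.log (ρ p) - ρ p + 1)) with hGdef
  have hG : Measurable G :=
    measurable_const.mul ((measurable_const.mul
      (hexp_meas.ennreal_ofReal)).add
      (hl_meas.ennreal_ofReal))
  -- pointwise bound on A
  have hpw : ∀ p ∈ A, ENNReal.ofReal (|d p| * ρ p) ≤ G p := by
    intro p hp
    have hpd : M ≤ |d p| := hp.2
    have key : (σ * |d p|) * ρ p ≤ Real.exp (σ * |d p|)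
        + (ρ p * Real.log (ρ p) - ρ p + 1) := mul_le_exp_add_l _ _ (hρnonneg p)
    have hexple : Real.exp (σ * |d p|)
        ≤ Real.exp (-(σ * M)) * Real.exp (2 * σ * |d p|) := by
      rw [← Real.exp_add]
      apply Real.exp_le_exp.mpr
      nlinarith
    have h5 : (σ * |d p|) * ρ p ≤ Real.exp (-(σ * M)) * Real.exp (2 * σ * |d p|)
        + (ρ p * Real.log (ρ p) - ρ p + 1) := by linarith
    have h6 := mul_le_mul_of_nonneg_left h5 (inv_nonneg.mpr hσ.le)
    have h7 : |d p| * ρ p = σ⁻¹ * ((σ * |d p|) * ρ p) := by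
      field_simp
    have h8 : |d p| * ρ p ≤ σ⁻¹ * (Real.exp (-(σ * M)) * Real.exp (2 * σ * |d p|)
        + (ρ p * Real.log (ρ p) - ρ p + 1)) := by rw [h7]; exact h6
    calc ENNReal.ofReal (|d p| * ρ p)
        ≤ ENNReal.ofReal (σ⁻¹ * (Real.exp (-(σ * M)) * Real.exp (2 * σ * |d p|)
            + (ρ p * Real.log (ρ p) - ρ p + 1))) := ENNReal.ofReal_le_ofReal h8
      _ = G p := by
          rw [ENNReal.ofReal_mul (inv_nonneg.mpr hσ.le),
            ENNReal.ofReal_add (by positivity) (l_nonneg _ (hρnonneg p)),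
            ENNReal.ofReal_mul (Real.exp_nonneg _)]
  -- main chain
  calc ∫⁻ p in A, ENNReal.ofReal (|d p| * ρ p) ∂lamT
      ≤ ∫⁻ p in A, G p ∂lamT := setLIntegral_mono hG hpw
    _ = ENNReal.ofReal σ⁻¹ * ∫⁻ p in A, (ENNReal.ofReal (Real.exp (-(σ * M)))
          * ENNReal.ofReal (Real.exp (2 * σ * |d p|))
          + ENNReal.ofReal (ρ p * Real.log (ρ p) - ρ p + 1)) ∂lamT := by
        simp only [hGdef]
        exact lintegral_const_mul _ (((hexp_meas.ennreal_ofReal).const_mul _).add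
          (hl_meas.ennreal_ofReal))
    _ = ENNReal.ofReal σ⁻¹ * (ENNReal.ofReal (Real.exp (-(σ * M)))
          * (∫⁻ p in A, ENNReal.ofReal (Real.exp (2 * σ * |d p|)) ∂lamT)
          + ∫⁻ p in A, ENNReal.ofReal (ρ p * Real.log (ρ p) - ρ p + 1) ∂lamT) := by
        rw [lintegral_add_left ((hexp_meas.ennreal_ofReal).const_mul _),
          lintegral_const_mul _ (hexp_meas.ennreal_ofReal)]
    _ ≤ ENNReal.ofReal σ⁻¹ * (ENNReal.ofReal (Real.exp (-(σ * M))) * C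
          + ENNReal.ofReal Υ) := by
        gcongr
        · exact lintegral_mono_set Set.inter_subset_left
        · exact (setLIntegral_le_lintegral _ _).trans hent
    _ ≤ ENNReal.ofReal σ⁻¹ * (ENNReal.ofReal (σ * ε / 2) + ENNReal.ofReal Υ) := by
        gcongr
        rw [← ENNReal.ofReal_toReal hC.ne, ← ENNReal.ofReal_mul (Real.exp_nonneg _)]
        exact ENNReal.ofReal_le_ofReal hexpM
    _ = ENNReal.ofReal ε := by
        rw [← ENNReal.ofReal_add (by positivity) hΥ.le,
          ← ENNReal.ofReal_mul (inv_nonneg.mpr hσ.le)]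
        have hval : σ⁻¹ * (σ * ε / 2 + Υ) = ε := by
          have h1 : σ * ε / 2 = Υ := by
            rw [hσdef, div_mul_cancel₀ _ hε.ne']
            ring
          have h2 : Υ + Υ = 2 * Υ := by ring
          rw [h1, hσdef, inv_div, h2, div_mul_cancel₀ _ (by positivity)]
        rw [hval]
end
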